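/- For every positive integer k there exists a positive integer n such that the complement of the line graph of the complete graph K_n has union boxicity greater than k; that is, ūbox((L(K_n))ᶜ) > k. -/

import Mathlib

universe u

/-- A graph is an interval graph if its vertices can be assigned nonempty closed
intervals of `ℝ` so that distinct vertices are adjacent iff their intervals meet. -/
def IsIntervalGraph {V : Type*} (G : SimpleGraph V) : Prop :=
  ∃ I : V → Set ℝ,
    (∀ v, ∃ a b : ℝ, a ≤ b ∧ I v = Set.Icc a b) ∧
    ∀ u v : V, u ≠ v → (G.Adj u v ↔ (I u ∩ I v).Nonempty)

/-- A co-interval graph is the complement of an interval graph. -/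
def IsCoIntervalGraph {V : Type*} (G : SimpleGraph V) : Prop :=
  IsIntervalGraph Gᶜ

/-- `G` is a vertex-disjoint union of co-interval graphs: its vertex set can be
partitioned (here via the fibers of a map `c`) so that every edge joins two vertices of
the same part and the restriction to each part is a co-interval graph. -/
def IsUnionCoIntervalGraph {V : Type u} (G : SimpleGraph V) : Prop :=
  ∃ (ι : Type u) (c : V → ι),
    (∀ u v : V, G.Adj u v → c u = c v) ∧
    ∀ i : ι, IsCoIntervalGraph (G.induce {v | c v = i})

/-- There is a covering of the edges of `Hᶜ` by finitely many subgraphs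
`G 0, …, G (t-1)` of `Hᶜ`, each of which restricted to its non-isolated vertices is a
co-interval graph, such that every vertex is a non-isolated vertex of at most `s`
of them. -/
def LocalCoverLE {V : Type u} (H : SimpleGraph V) (s : ℕ) : Prop :=
  ∃ (t : ℕ) (G : Fin t → SimpleGraph V),
    (∀ i, G i ≤ Hᶜ) ∧
    (∀ u v : V, Hᶜ.Adj u v → ∃ i, (G i).Adj u v) ∧
    (∀ i, IsCoIntervalGraph ((G i).induce (G i).support)) ∧
    ∀ v : V, {i : Fin t | v ∈ (G i).support}.ncard ≤ s

/-- The local boxicity of `H`. -/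
noncomputable def localBoxicity {V : Type u} (H : SimpleGraph V) : ℕ :=
  sInf {s : ℕ | LocalCoverLE H s}

/-- The union boxicity of `H`: the least `k` such that `Hᶜ` is covered by `k`
subgraphs, each a vertex-disjoint union of co-interval graphs. -/
noncomputable def unionBoxicity {V : Type u} (H : SimpleGraph V) : ℕ :=
  sInf {k : ℕ | ∃ G : Fin k → SimpleGraph V,
    (∀ i, G i ≤ Hᶜ) ∧
    (∀ u v : V, Hᶜ.Adj u v → ∃ i, (G i).Adj u v) ∧
    ∀ i, IsUnionCoIntervalGraph (G i)}

/-- The boxicity of `H`: the least `d` such that `H` is the intersection of `d`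
interval graphs on its vertex set. -/
noncomputable def boxicity {V : Type u} (H : SimpleGraph V) : ℕ :=
  sInf {d : ℕ | ∃ G : Fin d → SimpleGraph V,
    (∀ i, IsIntervalGraph (G i)) ∧
    ∀ u v : V, u ≠ v → (H.Adj u v ↔ ∀ i, (G i).Adj u v)}

/-- The line graph of the complete graph `K_n`: vertices are the 2-element subsets of
`Fin n`, two of them adjacent iff they share exactly one element. -/
def lineGraphCompleteGraph (n : ℕ) :
    SimpleGraph {s : Finset (Fin n) // s.card = 2} where
  Adj a b := ((a : Finset (Fin n)) ∩ (b : Finset (Fin n))).card = 1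
  symm := by
    constructor
    intro a b h
    rwa [Finset.inter_comm]
  loopless := by
    constructor
    intro a h
    rw [Finset.inter_self, a.2] at h
    exact absurd h (by norm_num)



def myR : ℕ → ℕ
  | 0 => 3
  | c+1 => (c+1) * myR c + 2

lemma myR_pos (c : ℕ) : 0 < myR c := by
  cases c with
  | zero => norm_num [myR]
  | succ c => simp [myR]

lemma ramsey_triangle (c : ℕ) : ∀ (s : Finset ℕ), s.card ≤ c → ∀ f : ℕ → ℕ → ℕ,
    (∀ x y, x < y → y < myR c → f x y ∈ s) →
    ∃ x y z, x < y ∧ y < z ∧ z < myR c ∧ f x y = f x z ∧ f x z = f y z := by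
  induction c with
  | zero =>
    intro s hs f hf
    have h0 := hf 0 1 (by norm_num) (by norm_num [myR])
    rw [Nat.le_zero, Finset.card_eq_zero] at hs
    simp [hs] at h0
  | succ c ih =>
    intro s hs f hf
    have hN : myR (c+1) = (c+1) * myR c + 2 := rfl
    set N := myR (c+1) with hNdef
    have hmaps : ∀ y ∈ Finset.Ico 1 N, f 0 y ∈ s := by
      intro y hy
      rw [Finset.mem_Ico] at hy
      exact hf 0 y hy.1 hy.2
    have hcard : s.card * myR c < (Finset.Ico 1 N).card := by
      rw [Nat.card_Ico]
      have h1 : s.card * myR c ≤ (c+1) * myR c := Nat.mul_le_mul_right _ hs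
      omega
    obtain ⟨i, his, hTcard⟩ :=
      Finset.exists_lt_card_fiber_of_mul_lt_card_of_maps_to hmaps hcard
    set T := (Finset.Ico 1 N).filter (fun y => f 0 y = i) with hTdef
    by_cases hcase : ∃ y ∈ T, ∃ z ∈ T, y < z ∧ f y z = i
    · obtain ⟨y, hy, z, hz, hyz, hfyz⟩ := hcase
      have hy' := Finset.mem_filter.mp hy
      have hz' := Finset.mem_filter.mp hz
      have hy1 : 1 ≤ y := (Finset.mem_Ico.mp hy'.1).1
      have hzN : z < N := (Finset.mem_Ico.mp hz'.1).2
      exact ⟨0, y, z, hy1, hyz, hzN, hy'.2.trans hz'.2.symm, hz'.2.trans hfyz.symm⟩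
    · push_neg at hcase
      have hTc : myR c < T.card := hTcard
      set e := T.orderIsoOfFin (rfl : T.card = T.card) with hedef
      set f' : ℕ → ℕ → ℕ := fun p q =>
        if h : p < T.card ∧ q < T.card then f (e ⟨p, h.1⟩) (e ⟨q, h.2⟩) else 0 with hf'def
      have hmemT : ∀ (p : ℕ) (hp : p < T.card), ((e ⟨p, hp⟩ : T) : ℕ) ∈ T := fun p hp =>
        Finset.coe_mem _
      have hlt : ∀ (p q : ℕ) (hp : p < T.card) (hq : q < T.card), p < q →
          ((e ⟨p, hp⟩ : T) : ℕ) < ((e ⟨q, hq⟩ : T) : ℕ) := by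
        intro p q hp hq hpq
        exact Subtype.coe_lt_coe.mpr (e.lt_iff_lt.mpr hpq)
      have hf' : ∀ p q, p < q → q < myR c → f' p q ∈ s.erase i := by
        intro p q hpq hq
        have hq' : q < T.card := hq.trans hTc
        have hp' : p < T.card := hpq.trans hq'
        rw [hf'def]
        simp only [dif_pos (And.intro hp' hq')]
        set u := ((e ⟨p, hp'⟩ : T) : ℕ)
        set v := ((e ⟨q, hq'⟩ : T) : ℕ)
        have hu : u ∈ T := hmemT p hp'
        have hv : v ∈ T := hmemT q hq'
        have huv : u < v := hlt p q hp' hq' hpq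
        have hvN : v < N := (Finset.mem_Ico.mp (Finset.mem_filter.mp hv).1).2
        exact Finset.mem_erase.mpr ⟨hcase u hu v hv huv, hf u v huv hvN⟩
      have hs' : (s.erase i).card ≤ c := by
        rw [Finset.card_erase_of_mem his]; omega
      obtain ⟨p, q, r, hpq, hqr, hrR, e1, e2⟩ := ih (s.erase i) hs' f' hf'
      have hr' : r < T.card := hrR.trans hTc
      have hq' : q < T.card := hqr.trans hr'
      have hp' : p < T.card := hpq.trans hq'
      refine ⟨((e ⟨p, hp'⟩ : T) : ℕ), ((e ⟨q, hq'⟩ : T) : ℕ), ((e ⟨r, hr'⟩ : T) : ℕ),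
        hlt p q hp' hq' hpq, hlt q r hq' hr' hqr, ?_, ?_, ?_⟩
      · exact (Finset.mem_Ico.mp (Finset.mem_filter.mp (hmemT r hr')).1).2
      · have := e1
        rw [hf'def] at this
        simpa only [dif_pos (And.intro hp' hq'), dif_pos (And.intro hp' hr')] using this
      · have := e2
        rw [hf'def] at this
        simpa only [dif_pos (And.intro hp' hr'), dif_pos (And.intro hq' hr')] using this

lemma icc_disjoint_iff {a₁ b₁ a₂ b₂ : ℝ} (h1 : a₁ ≤ b₁) (h2 : a₂ ≤ b₂) :
    Set.Icc a₁ b₁ ∩ Set.Icc a₂ b₂ = ∅ ↔ (b₁ < a₂ ∨ b₂ < a₁) := by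
  constructor
  · intro h
    by_contra hc
    push_neg at hc
    have hmem : max a₁ a₂ ∈ Set.Icc a₁ b₁ ∩ Set.Icc a₂ b₂ := by
      constructor
      · exact ⟨le_max_left _ _, max_le h1 hc.1⟩
      · exact ⟨le_max_right _ _, max_le hc.2 h2⟩
    rw [h] at hmem
    exact hmem
  · intro h
    rw [Set.eq_empty_iff_forall_notMem]
    rintro t ⟨⟨ht1, ht2⟩, ht3, ht4⟩
    rcases h with h | h
    · exact absurd (ht2.trans_lt h) (not_lt.mpr ht3)
    · exact absurd (ht4.trans_lt h) (not_lt.mpr ht1)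

section SingleEdge

variable {W : Type} [DecidableEq W]

def sE (u v : W) : SimpleGraph W where
  Adj a b := u ≠ v ∧ ((a = u ∧ b = v) ∨ (a = v ∧ b = u))
  symm := by constructor; rintro a b ⟨h, hab⟩; exact ⟨h, hab.symm.imp And.symm And.symm⟩
  loopless := by constructor; rintro a ⟨h, (⟨rfl, rfl⟩ | ⟨rfl, rfl⟩)⟩ <;> simp at h

lemma compl_complete_interval {S : Set W} (G : SimpleGraph W)
    (hS : ∀ a b : S, a ≠ b → ¬ G.Adj a.1 b.1) : IsCoIntervalGraph (G.induce S) := by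
  refine ⟨fun _ => Set.Icc 0 0, fun v => ⟨0, 0, le_refl _, rfl⟩, ?_⟩
  intro a b hab
  simp only [SimpleGraph.compl_adj, SimpleGraph.comap_adj]
  constructor
  · intro _
    exact ⟨0, by simp⟩
  · intro _
    exact ⟨hab, hS a b hab⟩

lemma bot_isUnion : IsUnionCoIntervalGraph (⊥ : SimpleGraph W) := by
  refine ⟨Bool, fun _ => true, fun u v h => absurd h (by simp), ?_⟩
  intro i
  exact compl_complete_interval _ (fun a b _ => by simp)

lemma sE_isUnion (u v : W) : IsUnionCoIntervalGraph (sE u v) := by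
  by_cases huv : u = v
  · subst huv
    refine ⟨Bool, fun _ => true, ?_, ?_⟩
    · rintro a b ⟨h, _⟩; rfl
    · intro i
      refine compl_complete_interval _ (fun a b _ hadj => hadj.1 rfl)
  · refine ⟨Bool, fun w => decide (w = u ∨ w = v), ?_, ?_⟩
    · rintro a b ⟨h, (⟨rfl, rfl⟩ | ⟨rfl, rfl⟩)⟩ <;> simp
    · intro i
      cases i with
      | false =>
        refine compl_complete_interval _ ?_
        rintro ⟨a, ha⟩ ⟨b, hb⟩ _ ⟨h, (⟨ha', hb'⟩ | ⟨ha', hb'⟩)⟩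
        · simp only [Set.mem_setOf_eq, decide_eq_false_iff_not] at ha
          exact ha (Or.inl ha')
        · simp only [Set.mem_setOf_eq, decide_eq_false_iff_not] at ha
          exact ha (Or.inr ha')
      | true =>
        refine ⟨fun w => if (w : W) = u then Set.Icc 0 0 else Set.Icc 1 1, ?_, ?_⟩
        · intro w
          by_cases h : (w : W) = u
          · exact ⟨0, 0, le_refl _, by simp [h]⟩
          · exact ⟨1, 1, le_refl _, by simp [h]⟩
        · rintro ⟨a, ha⟩ ⟨b, hb⟩ hab
          simp only [Set.mem_setOf_eq, decide_eq_true_eq] at ha hb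
          have hab' : a ≠ b := fun h => hab (by simp [h])
          have hcases : (a = u ∧ b = v) ∨ (a = v ∧ b = u) := by
            rcases ha with rfl | rfl <;> rcases hb with rfl | rfl
            · exact absurd rfl hab'
            · exact Or.inl ⟨rfl, rfl⟩
            · exact Or.inr ⟨rfl, rfl⟩
            · exact absurd rfl hab'
          constructor
          · intro hadj
            exact absurd ⟨huv, hcases⟩ hadj.2
          · rintro ⟨t, ht⟩
            exfalso
            rcases hcases with ⟨rfl, rfl⟩ | ⟨rfl, rfl⟩
            · simp only [if_pos rfl, if_neg (Ne.symm huv)] at ht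
              have h1 : t = 0 := le_antisymm ht.1.2 ht.1.1
              have h2 : (1:ℝ) ≤ t := ht.2.1
              rw [h1] at h2; norm_num at h2
            · simp only [if_pos rfl, if_neg (Ne.symm huv)] at ht
              have h1 : t = 0 := le_antisymm ht.2.2 ht.2.1
              have h2 : (1:ℝ) ≤ t := ht.1.1
              rw [h1] at h2; norm_num at h2
end SingleEdge


section PV

variable {n : ℕ}

def pv (x y : Fin n) (h : x ≠ y) : {s : Finset (Fin n) // s.card = 2} :=
  ⟨{x, y}, Finset.card_pair h⟩

lemma pv_adj {x y z : Fin n} (hxy : x ≠ y) (hyz : y ≠ z) (hxz : x ≠ z) :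
    (lineGraphCompleteGraph n).Adj (pv x y hxy) (pv y z hyz) := by
  show (({x, y} : Finset (Fin n)) ∩ {y, z}).card = 1
  have h : ({x, y} : Finset (Fin n)) ∩ {y, z} = {y} := by
    ext a
    simp only [Finset.mem_inter, Finset.mem_insert, Finset.mem_singleton]
    constructor
    · rintro ⟨ha1 | ha1, ha2 | ha2⟩
      · exact ha2
      · exact absurd (ha1.symm.trans ha2) hxz
      · exact ha1
      · exact ha1
    · rintro rfl
      exact ⟨Or.inr rfl, Or.inl rfl⟩
  rw [h, Finset.card_singleton]

lemma pv_inter_empty {x y z w : Fin n} (hxz : x ≠ z) (hxw : x ≠ w) (hyz : y ≠ z)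
    (hyw : y ≠ w) : (({x, y} : Finset (Fin n)) ∩ {z, w}) = ∅ := by
  ext a
  simp only [Finset.mem_inter, Finset.mem_insert, Finset.mem_singleton,
    Finset.notMem_empty, iff_false, not_and, not_or]
  rintro (rfl | rfl) <;> exact ⟨by assumption, by assumption⟩

lemma pv_ne1 {x y z : Fin n} (hxy : x ≠ y) (hyz : y ≠ z) (hxz : x ≠ z) :
    pv x y hxy ≠ pv y z hyz := by
  intro h
  have h' : ({x, y} : Finset (Fin n)) = {y, z} := congrArg Subtype.val h
  have hx : x ∈ ({y, z} : Finset (Fin n)) := h' ▸ Finset.mem_insert_self x {y}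
  simp only [Finset.mem_insert, Finset.mem_singleton] at hx
  tauto

lemma pv_ne2 {x y z w : Fin n} (hxy : x ≠ y) (hzw : z ≠ w) (hxz : x ≠ z)
    (hxw : x ≠ w) : pv x y hxy ≠ pv z w hzw := by
  intro h
  have h' : ({x, y} : Finset (Fin n)) = {z, w} := congrArg Subtype.val h
  have hx : x ∈ ({z, w} : Finset (Fin n)) := h' ▸ Finset.mem_insert_self x {y}
  simp only [Finset.mem_insert, Finset.mem_singleton] at hx
  tauto

end PV

lemma no_cover {k m n : ℕ} (hk : 0 < k) (hm : m ≤ k)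
    (hn : n = myR (Fintype.card (Finset (Fin k × Bool))))
    (G : Fin m → SimpleGraph {s : Finset (Fin n) // s.card = 2})
    (hsub : ∀ i, G i ≤ lineGraphCompleteGraph n)
    (hcov : ∀ u v, (lineGraphCompleteGraph n).Adj u v → ∃ i, (G i).Adj u v)
    (hU : ∀ i, IsUnionCoIntervalGraph (G i)) : False := by
  classical
  choose ι c hcc hpart using hU
  have hpartE : ∀ (i : Fin m) (p : ι i),
      ∃ I : ↥{v : {s : Finset (Fin n) // s.card = 2} | c i v = p} → Set ℝ,
        (∀ v, ∃ a b : ℝ, a ≤ b ∧ I v = Set.Icc a b) ∧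
        ∀ u v, u ≠ v →
          ((((G i).induce {v | c i v = p})ᶜ).Adj u v ↔ (I u ∩ I v).Nonempty) :=
    fun i p => hpart i p
  choose I hIbound hIadj using hpartE
  choose aE bE hab hIcc using hIbound
  let Ja : Fin m → {s : Finset (Fin n) // s.card = 2} → ℝ := fun i v => aE i (c i v) ⟨v, rfl⟩
  let Jb : Fin m → {s : Finset (Fin n) // s.card = 2} → ℝ := fun i v => bE i (c i v) ⟨v, rfl⟩
  have hJ : ∀ i v, Ja i v ≤ Jb i v := fun i v => hab i _ _
  have tr : ∀ (i : Fin m) (v : {s : Finset (Fin n) // s.card = 2}) (p : ι i) (h : c i v = p),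
      aE i p ⟨v, h⟩ = Ja i v ∧ bE i p ⟨v, h⟩ = Jb i v := by
    intro i v p h
    subst h
    exact ⟨rfl, rfl⟩
  have keyIff : ∀ (i : Fin m) (u v : {s : Finset (Fin n) // s.card = 2}), u ≠ v → c i u = c i v →
      ((G i).Adj u v ↔
        Set.Icc (Ja i u) (Jb i u) ∩ Set.Icc (Ja i v) (Jb i v) = ∅) := by
    intro i u v hne hp
    have hne' : (⟨u, hp⟩ : ↥{v' : {s : Finset (Fin n) // s.card = 2} | c i v' = c i v}) ≠ ⟨v, rfl⟩ :=
      fun h => hne (congrArg Subtype.val h)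
    have h2 := hIadj i (c i v) ⟨u, hp⟩ ⟨v, rfl⟩ hne'
    rw [hIcc i (c i v) ⟨u, hp⟩, hIcc i (c i v) ⟨v, rfl⟩,
      (tr i u (c i v) hp).1, (tr i u (c i v) hp).2,
      (tr i v (c i v) rfl).1, (tr i v (c i v) rfl).2] at h2
    simp only [SimpleGraph.compl_adj, SimpleGraph.comap_adj] at h2
    constructor
    · intro hadj
      rw [← Set.not_nonempty_iff_eq_empty]
      intro hne''
      exact (h2.mpr hne'').2 hadj
    · intro hemp
      by_contra hnadj
      rw [← Set.not_nonempty_iff_eq_empty] at hemp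
      exact hemp (h2.mp ⟨hne', hnadj⟩)
  have colEx : ∀ (x y z : Fin n) (h1 : x < y) (h2 : y < z),
      ∃ q : Fin m × Bool,
        c q.1 (pv x y h1.ne) = c q.1 (pv y z h2.ne) ∧
        ((q.2 = true ∧ Jb q.1 (pv x y h1.ne) < Ja q.1 (pv y z h2.ne)) ∨
         (q.2 = false ∧ Jb q.1 (pv y z h2.ne) < Ja q.1 (pv x y h1.ne))) := by
    intro x y z h1 h2
    have hadj := pv_adj h1.ne h2.ne (h1.trans h2).ne
    obtain ⟨i, hi⟩ := hcov _ _ hadj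
    have hpeq := hcc i _ _ hi
    have hdisj := (keyIff i _ _ (pv_ne1 h1.ne h2.ne (h1.trans h2).ne) hpeq).mp hi
    rw [icc_disjoint_iff (hJ i _) (hJ i _)] at hdisj
    rcases hdisj with h | h
    · exact ⟨(i, true), hpeq, Or.inl ⟨rfl, h⟩⟩
    · exact ⟨(i, false), hpeq, Or.inr ⟨rfl, h⟩⟩
  choose F hFpeq hFor using colEx
  let colP : Fin n → Fin n → Fin n → Fin k × Bool := fun x y z =>
    if h : x < y ∧ y < z then
      (Fin.castLE hm (F x y z h.1 h.2).1, (F x y z h.1 h.2).2)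
    else (⟨0, hk⟩, true)
  let γ := Finset (Fin k × Bool)
  let Aset : Fin n → Fin n → γ := fun y z =>
    (Finset.univ.filter (fun x => x < y)).image (fun x => colP x y z)
  let enc : γ → ℕ := fun A => ((Fintype.equivFin γ) A : ℕ)
  have hencinj : Function.Injective enc := fun A B h =>
    (Fintype.equivFin γ).injective (Fin.val_injective h)
  let g : ℕ → ℕ → ℕ := fun p q =>
    if h : p < n ∧ q < n then enc (Aset ⟨p, h.1⟩ ⟨q, h.2⟩) else enc ∅
  have hgmem : ∀ x y, x < y → y < myR (Fintype.card γ) → g x y ∈ Finset.univ.image enc := by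
    intro x y _ _
    have : ∃ A, g x y = enc A := by
      show ∃ A, (if h : x < n ∧ y < n then enc (Aset ⟨x, h.1⟩ ⟨y, h.2⟩) else enc ∅) = enc A
      split
      · exact ⟨_, rfl⟩
      · exact ⟨_, rfl⟩
    obtain ⟨A, hA⟩ := this
    rw [hA]
    exact Finset.mem_image_of_mem _ (Finset.mem_univ _)
  have hcardle : (Finset.univ.image enc).card ≤ Fintype.card γ :=
    le_trans Finset.card_image_le (le_of_eq (Finset.card_univ))
  obtain ⟨y, z, w, hyz, hzw, hwR, e1, e2⟩ :=
    ramsey_triangle (Fintype.card γ) _ hcardle g hgmem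
  have hwn : w < n := hn ▸ hwR
  have hzn : z < n := hzw.trans hwn
  have hyn : y < n := hyz.trans hzn
  set yv : Fin n := ⟨y, hyn⟩ with hyv
  set zv : Fin n := ⟨z, hzn⟩ with hzv
  set wv : Fin n := ⟨w, hwn⟩ with hwv
  have hyzf : yv < zv := hyz
  have hzwf : zv < wv := hzw
  have hA : Aset yv zv = Aset zv wv := by
    apply hencinj
    have e3 : g y z = g z w := e1.trans e2
    show enc (Aset yv zv) = enc (Aset zv wv)
    have hgyz : g y z = enc (Aset yv zv) := dif_pos (And.intro hyn hzn)
    have hgzw : g z w = enc (Aset zv wv) := dif_pos (And.intro hzn hwn)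
    rw [← hgyz, ← hgzw, e3]
  have hmem : colP yv zv wv ∈ Aset zv wv :=
    Finset.mem_image_of_mem _ (Finset.mem_filter.mpr ⟨Finset.mem_univ _, hyzf⟩)
  rw [← hA] at hmem
  obtain ⟨x, hxmem, hxeq⟩ := Finset.mem_image.mp hmem
  have hxy : x < yv := (Finset.mem_filter.mp hxmem).2
  have hc1 : x < yv ∧ yv < zv := ⟨hxy, hyzf⟩
  have hc2 : yv < zv ∧ zv < wv := ⟨hyzf, hzwf⟩
  have hxeq' : (Fin.castLE hm (F x yv zv hc1.1 hc1.2).1, (F x yv zv hc1.1 hc1.2).2)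
      = (Fin.castLE hm (F yv zv wv hc2.1 hc2.2).1, (F yv zv wv hc2.1 hc2.2).2) := by
    have h1 : colP x yv zv = _ := dif_pos hc1
    have h2 : colP yv zv wv = _ := dif_pos hc2
    rw [h1, h2] at hxeq
    exact hxeq
  have hfst : (F x yv zv hc1.1 hc1.2).1 = (F yv zv wv hc2.1 hc2.2).1 := by
    have := congrArg (fun p => (Prod.fst p : Fin k).val) hxeq'
    simp only [Fin.coe_castLE] at this
    exact Fin.val_injective this
  have hsnd : (F x yv zv hc1.1 hc1.2).2 = (F yv zv wv hc2.1 hc2.2).2 :=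
    (Prod.ext_iff.mp hxeq').2
  have P1 := hFpeq x yv zv hc1.1 hc1.2
  have O1 := hFor x yv zv hc1.1 hc1.2
  have P2 := hFpeq yv zv wv hc2.1 hc2.2
  have O2 := hFor yv zv wv hc2.1 hc2.2
  rw [← hfst] at P2 O2
  rw [← hsnd] at O2
  set i := (F x yv zv hc1.1 hc1.2).1 with hi
  -- all four points distinct
  have hxyn : x ≠ yv := hxy.ne
  have hyzn : yv ≠ zv := hyzf.ne
  have hzwn : zv ≠ wv := hzwf.ne
  have hxzn : x ≠ zv := (hxy.trans hyzf).ne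
  have hxwn : x ≠ wv := ((hxy.trans hyzf).trans hzwf).ne
  have hywn : yv ≠ wv := (hyzf.trans hzwf).ne
  have hpe : c i (pv x yv hxyn) = c i (pv zv wv hzwn) := P1.trans P2
  have hneq : pv x yv hxyn ≠ pv zv wv hzwn := pv_ne2 hxyn hzwn hxzn hxwn
  have hdisj : Set.Icc (Ja i (pv x yv hxyn)) (Jb i (pv x yv hxyn)) ∩
      Set.Icc (Ja i (pv zv wv hzwn)) (Jb i (pv zv wv hzwn)) = ∅ := by
    rw [icc_disjoint_iff (hJ i _) (hJ i _)]
    rcases O1 with ⟨hb1, hlt1⟩ | ⟨hb1, hlt1⟩ <;> rcases O2 with ⟨hb2, hlt2⟩ | ⟨hb2, hlt2⟩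
    · exact Or.inl (lt_of_lt_of_le hlt1 (le_of_lt (lt_of_le_of_lt (hJ i _) hlt2)))
    · rw [hb1] at hb2; exact absurd hb2 (by simp)
    · rw [hb1] at hb2; exact absurd hb2 (by simp)
    · exact Or.inr (lt_of_lt_of_le hlt2 (le_of_lt (lt_of_le_of_lt (hJ i _) hlt1)))
  have hadj := (keyIff i _ _ hneq hpe).mpr hdisj
  have hL := hsub i hadj
  have hcard : (({x, yv} : Finset (Fin n)) ∩ {zv, wv}).card = 1 := hL
  rw [pv_inter_empty hxzn hxwn hyzn hywn] at hcard
  simp at hcard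

lemma lt_sInf_of {S : Set ℕ} {k : ℕ} (hne : S.Nonempty) (h : ∀ m ∈ S, k < m) :
    k < sInf S := h _ (Nat.sInf_mem hne)


/-- For every positive integer `k` there is a positive integer `n`
such that the complement of the line graph of `K_n` has union boxicity greater
than `k`. -/
theorem stmt_12 (k : ℕ) (hk : 0 < k) :
    ∃ n : ℕ, 0 < n ∧ k < unionBoxicity (lineGraphCompleteGraph n)ᶜ := by
  classical
  refine ⟨myR (Fintype.card (Finset (Fin k × Bool))), myR_pos _, ?_⟩
  set n := myR (Fintype.card (Finset (Fin k × Bool))) with hn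
  unfold unionBoxicity
  rw [compl_compl]
  apply lt_sInf_of
  · -- nonemptiness: the cover by single edges
    refine ⟨Fintype.card
        ({s : Finset (Fin n) // s.card = 2} × {s : Finset (Fin n) // s.card = 2}), ?_⟩
    let eqv := (Fintype.equivFin
      ({s : Finset (Fin n) // s.card = 2} × {s : Finset (Fin n) // s.card = 2})).symm
    refine ⟨fun j => if (lineGraphCompleteGraph n).Adj (eqv j).1 (eqv j).2
        then sE (eqv j).1 (eqv j).2 else ⊥, ?_, ?_, ?_⟩
    · intro j
      dsimp only
      split_ifs with h
      · rintro a b ⟨hne, (⟨rfl, rfl⟩ | ⟨rfl, rfl⟩)⟩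
        · exact h
        · exact h.symm
      · exact bot_le
    · intro u v huv
      refine ⟨eqv.symm (u, v), ?_⟩
      dsimp only
      rw [Equiv.apply_symm_apply, if_pos huv]
      exact ⟨huv.ne, Or.inl ⟨rfl, rfl⟩⟩
    · intro j
      dsimp only
      split_ifs with h
      · exact sE_isUnion _ _
      · exact bot_isUnion
  · intro m hm
    obtain ⟨G, hsub, hcov, hU⟩ := hm
    by_contra h'
    push_neg at h'
    exact no_cover hk h' hn G hsub hcov hU
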